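/- For the same setup, replacing the lens area A(r,r_d,y) on |r_d − r| ≤ y ≤ r_d by its inscribed-disk lower bound π((r + r_d − y)/2)² yields the lower bound: F(r) ≥ 1 − [A₀(r) + (2(r_d + r)/(r_d²√λ_f))(erf(−(r/2)√(λ_f π)) − erf(−(α/2)√(π/λ_f))) + (4/(π r_d² λ_f))(e^{−π α²/(4λ_f)} − e^{−λ_f π r²/4})], with α = 2λ_f min(r, r_d) and A₀(r) = e^{−λ_f min(π r², π r_d²)}(r_d − r)²/r_d². -/

import Mathlib

open MeasureTheory Metric Real Filter ProbabilityTheory Pointwise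
open scoped ENNReal

noncomputable section

/-- The Euclidean plane. -/
abbrev E2 := EuclideanSpace ℝ (Fin 2)

/-- The point `(y, 0)` on the x-axis. -/
def pt (y : ℝ) : E2 := (WithLp.equiv 2 (Fin 2 → ℝ)).symm ![y, 0]

/-- Area of the intersection (lens) of a disk of radius `a` centered at the origin and a disk
of radius `b` whose center is at distance `y` from the origin. -/
def lensArea (a b y : ℝ) : ℝ :=
  (volume (closedBall (0 : E2) a ∩ closedBall (pt y) b)).toReal

/-- The uniform probability measure on the closed disk `B(0, rd)`. -/
def unifBall (rd : ℝ) : Measure E2 :=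
  (volume (closedBall (0 : E2) rd))⁻¹ • volume.restrict (closedBall (0 : E2) rd)

/-- Intensity measure `lf · Leb` restricted to the disk `B(0, rd)`. -/
def ballIntensity (lf rd : ℝ) : Measure E2 :=
  ENNReal.ofReal lf • volume.restrict (closedBall (0 : E2) rd)

/-- `Φ` is a Poisson point process with (finite) intensity measure `Λ` under `P`:
counts on measurable sets are Poisson distributed with mean `Λ A`, and counts on
pairwise disjoint sets are independent. -/
def IsPoissonPP {Ω : Type*} [MeasurableSpace Ω] (P : Measure Ω) (Λ : Measure E2)
    (Φ : Ω → Finset E2) : Prop :=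
  (∀ A : Set E2, MeasurableSet A →
      Measurable (fun ω => ((Φ ω : Set E2) ∩ A).ncard) ∧
      ∀ n : ℕ, P {ω | ((Φ ω : Set E2) ∩ A).ncard = n} = poissonPMF (Λ A).toNNReal n) ∧
  (∀ (n : ℕ) (A : Fin n → Set E2), (∀ i, MeasurableSet (A i)) →
      Pairwise (Function.onFun Disjoint A) →
      iIndepFun (fun i ω => ((Φ ω : Set E2) ∩ A i).ncard) P)

/-- The Gauss error function. -/
def erf (x : ℝ) : ℝ := (2 / Real.sqrt π) * ∫ t in (0:ℝ)..x, Real.exp (-t ^ 2)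

lemma vol2 (x : E2) (R : ℝ) (hR : 0 ≤ R) :
    volume (closedBall x R) = ENNReal.ofReal (π * R ^ 2) := by
  rw [EuclideanSpace.volume_closedBall]
  simp [Fintype.card_fin]
  rw [← ENNReal.ofReal_pow hR, ← ENNReal.ofReal_mul (by positivity)]
  rw [Real.sq_sqrt Real.pi_nonneg]
  norm_num [Real.Gamma_two]
  ring_nf

lemma dist_pt (a b : ℝ) : dist (pt a) (pt b) = |a - b| := by
  rw [EuclideanSpace.dist_eq]
  simp [pt, Fin.sum_univ_two, Real.dist_eq]
  rw [Real.sqrt_sq_eq_abs]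

lemma pt_zero : pt 0 = 0 := by
  apply (WithLp.equiv 2 (Fin 2 → ℝ)).injective
  simp [pt]

lemma dist_pt_zero (a : ℝ) : dist (pt a) (0 : E2) = |a| := by
  rw [← pt_zero, dist_pt]; simp

lemma lensArea_eq_min (r rd y : ℝ) (hr0 : 0 < r) (hrd : 0 < rd)
    (hy0 : 0 ≤ y) (hy : y ≤ |rd - r|) :
    lensArea r rd y = min (π * r ^ 2) (π * rd ^ 2) := by
  rcases le_total r rd with h | h
  · have hy' : y ≤ rd - r := by rwa [abs_of_nonneg (by linarith)] at hy
    have hsub : closedBall (0 : E2) r ⊆ closedBall (pt y) rd := by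
      intro x hx
      simp only [mem_closedBall] at hx ⊢
      calc dist x (pt y) ≤ dist x 0 + dist (0 : E2) (pt y) := dist_triangle _ _ _
        _ ≤ r + |y| := by
            rw [dist_comm (0 : E2), dist_pt_zero]; exact add_le_add hx le_rfl
        _ ≤ rd := by rw [abs_of_nonneg hy0]; linarith
    rw [lensArea, Set.inter_eq_self_of_subset_left hsub, vol2 _ _ hr0.le,
      ENNReal.toReal_ofReal (by positivity),
      min_eq_left (mul_le_mul_of_nonneg_left (pow_le_pow_left₀ hr0.le h 2) Real.pi_nonneg)]
  · have hy' : y ≤ r - rd := by rw [abs_of_nonpos (by linarith)] at hy; linarith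
    have hsub : closedBall (pt y) rd ⊆ closedBall (0 : E2) r := by
      intro x hx
      simp only [mem_closedBall] at hx ⊢
      calc dist x 0 ≤ dist x (pt y) + dist (pt y) (0 : E2) := dist_triangle _ _ _
        _ ≤ rd + |y| := add_le_add hx (dist_pt_zero y).le
        _ ≤ r := by rw [abs_of_nonneg hy0]; linarith
    rw [lensArea, Set.inter_eq_self_of_subset_right hsub, vol2 _ _ hrd.le,
      ENNReal.toReal_ofReal (by positivity),
      min_eq_right (mul_le_mul_of_nonneg_left (pow_le_pow_left₀ hrd.le h 2) Real.pi_nonneg)]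

lemma lensArea_ge (r rd y : ℝ) (hr0 : 0 < r)
    (h1 : |rd - r| ≤ y) (h2 : y ≤ rd) :
    π * ((r + rd - y) / 2) ^ 2 ≤ lensArea r rd y := by
  set ρ : ℝ := (r + rd - y) / 2 with hρ
  have hy0 : 0 ≤ y := le_trans (abs_nonneg _) h1
  have habs1 : rd - r ≤ y := le_trans (le_abs_self _) h1
  have habs2 : r - rd ≤ y := by have := le_trans (neg_le_abs (rd - r)) h1; linarith
  have hρ0 : 0 ≤ ρ := by simp only [hρ]; linarith
  have hrρ : 0 ≤ r - ρ := by simp only [hρ]; linarith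
  have hsub : closedBall (pt (r - ρ)) ρ ⊆
      closedBall (0 : E2) r ∩ closedBall (pt y) rd := by
    intro x hx
    simp only [mem_closedBall] at hx
    constructor
    · simp only [mem_closedBall]
      calc dist x 0 ≤ dist x (pt (r - ρ)) + dist (pt (r - ρ)) (0 : E2) := dist_triangle _ _ _
        _ ≤ ρ + |r - ρ| := add_le_add hx (dist_pt_zero _).le
        _ = r := by rw [abs_of_nonneg hrρ]; ring
    · simp only [mem_closedBall]
      calc dist x (pt y) ≤ dist x (pt (r - ρ)) + dist (pt (r - ρ)) (pt y) := dist_triangle _ _ _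
        _ ≤ ρ + |r - ρ - y| := add_le_add hx (dist_pt _ _).le
        _ = rd := by
            rw [abs_of_nonpos (by simp only [hρ]; linarith)]
            simp only [hρ]; ring
  have hvol : ENNReal.ofReal (π * ρ ^ 2) ≤
      volume (closedBall (0 : E2) r ∩ closedBall (pt y) rd) := by
    rw [← vol2 (pt (r - ρ)) ρ hρ0]; exact measure_mono hsub
  have hfin : volume (closedBall (0 : E2) r ∩ closedBall (pt y) rd) ≠ ⊤ := by
    refine ne_top_of_le_ne_top ?_ (measure_mono Set.inter_subset_left)
    rw [vol2 _ _ hr0.le]; exact ENNReal.ofReal_ne_top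
  have := ENNReal.toReal_mono hfin hvol
  rwa [ENNReal.toReal_ofReal (by positivity)] at this

lemma hasDerivAt_erf (x : ℝ) :
    HasDerivAt erf (2 / Real.sqrt π * Real.exp (-x ^ 2)) x := by
  have hc : Continuous fun t : ℝ => Real.exp (-t ^ 2) := by continuity
  have h : HasDerivAt (fun u : ℝ => ∫ t in (0:ℝ)..u, Real.exp (-t ^ 2))
      (Real.exp (-x ^ 2)) x :=
    intervalIntegral.integral_hasDerivAt_right (hc.intervalIntegrable _ _)
      hc.aestronglyMeasurable.stronglyMeasurableAtFilter hc.continuousAt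
  exact h.const_mul (2 / Real.sqrt π)
set_option maxHeartbeats 1600000 in
theorem contact_cdf_explicit_lower_bound (lf rd r : ℝ) (hlf : 0 < lf) (hrd : 0 < rd)
    (hr0 : 0 < r) (hr2 : r ≤ 2 * rd) (α A0 : ℝ)
    (hα : α = 2 * lf * min r rd)
    (hA0 : A0 = Real.exp (-(lf * min (π * r ^ 2) (π * rd ^ 2))) * (rd - r) ^ 2 / rd ^ 2) :
    1 - (A0 + (2 * (rd + r) / (rd ^ 2 * Real.sqrt lf)) *
          (erf (-(r / 2) * Real.sqrt (lf * π)) - erf (-(α / 2) * Real.sqrt (π / lf))) +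
        (4 / (π * rd ^ 2 * lf)) *
          (Real.exp (-(π * α ^ 2 / (4 * lf))) - Real.exp (-(lf * π * r ^ 2 / 4)))) ≤
      1 - ∫ y in (0:ℝ)..rd,
        Real.exp (-(lf * min (min (π * r ^ 2) (π * rd ^ 2)) (lensArea r rd y))) *
          (2 * y / rd ^ 2) := by
  have hπ : (0:ℝ) < π := Real.pi_pos
  set M : ℝ := min (π * r ^ 2) (π * rd ^ 2) with hM
  set d : ℝ := |rd - r| with hd
  have hd0 : (0:ℝ) ≤ d := abs_nonneg _
  have hdrd : d ≤ rd := abs_le.mpr ⟨by linarith, by linarith⟩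
  set m : ℝ := min r rd with hm
  have hm0 : 0 < m := lt_min hr0 hrd
  have hdm : r + rd - d = 2 * m := by
    rcases le_total r rd with h | h
    · rw [hd, abs_of_nonneg (by linarith : (0:ℝ) ≤ rd - r), hm, min_eq_left h]; ring
    · rw [hd, abs_of_nonpos (by linarith : rd - r ≤ (0:ℝ)), hm, min_eq_right h]; ring
  apply sub_le_sub_left
  -- the piecewise upper bound functions
  set g2 : ℝ → ℝ := fun y =>
    Real.exp (-(lf * (π * ((r + rd - y) / 2) ^ 2))) * (2 * y / rd ^ 2) with hg2
  have hg2c : Continuous g2 := by fun_prop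
  set H : ℝ → ℝ := fun y =>
    (2 * (rd + r) / (rd ^ 2 * Real.sqrt lf)) *
        erf (Real.sqrt (lf * π) / 2 * (y - (r + rd)))
      - (4 / (π * rd ^ 2 * lf)) *
        Real.exp (-(lf * (π * ((r + rd - y) / 2) ^ 2))) with hH
  have hslf : Real.sqrt lf > 0 := Real.sqrt_pos.mpr hlf
  have hspi : Real.sqrt π > 0 := Real.sqrt_pos.mpr hπ
  have hmul : Real.sqrt lf * Real.sqrt lf = lf := Real.mul_self_sqrt hlf.le
  have hmulp : Real.sqrt π * Real.sqrt π = π := Real.mul_self_sqrt Real.pi_nonneg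
  have hsqmul : Real.sqrt (lf * π) = Real.sqrt lf * Real.sqrt π := Real.sqrt_mul hlf.le π
  have hHderiv : ∀ y : ℝ, HasDerivAt H (g2 y) y := by
    intro y
    have hinner : HasDerivAt (fun y : ℝ => Real.sqrt (lf * π) / 2 * (y - (r + rd)))
        (Real.sqrt (lf * π) / 2) y := by
      simpa using ((hasDerivAt_id y).sub_const (r + rd)).const_mul (Real.sqrt (lf * π) / 2)
    have h1 : HasDerivAt (fun y : ℝ => erf (Real.sqrt (lf * π) / 2 * (y - (r + rd))))
        (2 / Real.sqrt π * Real.exp (-(Real.sqrt (lf * π) / 2 * (y - (r + rd))) ^ 2)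
          * (Real.sqrt (lf * π) / 2)) y :=
      (hasDerivAt_erf _).comp y hinner
    have hu : HasDerivAt (fun y : ℝ => -(lf * (π * ((r + rd - y) / 2) ^ 2)))
        (lf * (π * ((r + rd - y) / 2))) y := by
      have h0 : HasDerivAt (fun y : ℝ => (r + rd - y) / 2) ((0 - 1) / 2 : ℝ) y :=
        ((hasDerivAt_const y (r + rd)).sub (hasDerivAt_id' y)).div_const 2
      have h0' := h0.pow 2
      have := ((h0'.const_mul π).const_mul lf).neg
      exact this.congr_deriv (by push_cast; ring)
    have h2 : HasDerivAt (fun y : ℝ => Real.exp (-(lf * (π * ((r + rd - y) / 2) ^ 2))))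
        (Real.exp (-(lf * (π * ((r + rd - y) / 2) ^ 2))) * (lf * (π * ((r + rd - y) / 2)))) y :=
      hu.exp
    have hcomb := (h1.const_mul (2 * (rd + r) / (rd ^ 2 * Real.sqrt lf))).sub
      (h2.const_mul (4 / (π * rd ^ 2 * lf)))
    have hE : (-(Real.sqrt (lf * π) / 2 * (y - (r + rd))) ^ 2)
        = -(lf * (π * ((r + rd - y) / 2) ^ 2)) := by
      rw [mul_pow, div_pow, Real.sq_sqrt (by positivity)]
      ring
    rw [hE] at hcomb
    refine hcomb.congr_deriv (Eq.symm ?_)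
    simp only [hg2]
    rw [hsqmul]
    set ex : ℝ := Real.exp (-(lf * (π * ((r + rd - y) / 2) ^ 2))) with hex
    field_simp
    ring
  have hftc : ∫ y in d..rd, g2 y = H rd - H d :=
    intervalIntegral.integral_eq_sub_of_hasDerivAt (fun y _ => hHderiv y)
      (hg2c.intervalIntegrable _ _)
  -- closed-form identification
  have ea1 : -(r / 2) * Real.sqrt (lf * π)
      = Real.sqrt (lf * π) / 2 * (rd - (r + rd)) := by ring
  have hdneg : d - (r + rd) = -(2 * m) := by linarith
  have key : lf * Real.sqrt (π / lf) = Real.sqrt (lf * π) := by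
    rw [Real.sqrt_div Real.pi_nonneg, hsqmul, ← mul_div_assoc,
      div_eq_iff (ne_of_gt hslf)]
    linear_combination (-Real.sqrt π) * hmul
  have ea2 : -(α / 2) * Real.sqrt (π / lf)
      = Real.sqrt (lf * π) / 2 * (d - (r + rd)) := by
    rw [hdneg, hα]
    linear_combination (-m) * key
  have eb1 : -(π * α ^ 2 / (4 * lf)) = -(lf * (π * ((r + rd - d) / 2) ^ 2)) := by
    rw [hα, hdm]
    field_simp
    ring
  have eb2 : -(lf * π * r ^ 2 / 4) = -(lf * (π * ((r + rd - rd) / 2) ^ 2)) := by ring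
  have hclosed : A0 + (2 * (rd + r) / (rd ^ 2 * Real.sqrt lf)) *
          (erf (-(r / 2) * Real.sqrt (lf * π)) - erf (-(α / 2) * Real.sqrt (π / lf))) +
        (4 / (π * rd ^ 2 * lf)) *
          (Real.exp (-(π * α ^ 2 / (4 * lf))) - Real.exp (-(lf * π * r ^ 2 / 4)))
      = Real.exp (-(lf * M)) * d ^ 2 / rd ^ 2 + (H rd - H d) := by
    rw [ea1, ea2, eb1, eb2, hA0, hH, hd, sq_abs]
    ring
  rw [hclosed, ← hftc]
  -- first piece closed form
  have hfirst : (∫ y in (0:ℝ)..d, Real.exp (-(lf * M)) * (2 * y / rd ^ 2))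
      = Real.exp (-(lf * M)) * d ^ 2 / rd ^ 2 := by
    have hfun : (fun y : ℝ => Real.exp (-(lf * M)) * (2 * y / rd ^ 2))
        = fun y : ℝ => (Real.exp (-(lf * M)) * 2 / rd ^ 2) * y := by
      funext y; ring
    rw [hfun, intervalIntegral.integral_const_mul, integral_id]
    field_simp
    ring
  rw [← hfirst]
  -- pointwise bounds
  have p1 : ∀ y ∈ Set.Icc (0:ℝ) d,
      Real.exp (-(lf * min M (lensArea r rd y))) * (2 * y / rd ^ 2)
        ≤ Real.exp (-(lf * M)) * (2 * y / rd ^ 2) := by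
    intro y hy
    rw [lensArea_eq_min r rd y hr0 hrd hy.1 hy.2, ← hM, min_self]
  have p2 : ∀ y ∈ Set.Icc d rd,
      Real.exp (-(lf * min M (lensArea r rd y))) * (2 * y / rd ^ 2) ≤ g2 y := by
    intro y hy
    obtain ⟨hy1, hy2⟩ := hy
    have hy0 : (0:ℝ) ≤ y := le_trans hd0 hy1
    have hge := lensArea_ge r rd y hr0 hy1 hy2
    have habs1 : rd - r ≤ y := le_trans (le_abs_self _) hy1
    have habs2 : r - rd ≤ y := by have := le_trans (neg_le_abs (rd - r)) hy1; linarith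
    have hρr : (r + rd - y) / 2 ≤ r := by linarith
    have hρrd : (r + rd - y) / 2 ≤ rd := by linarith
    have hρ0 : (0:ℝ) ≤ (r + rd - y) / 2 := by linarith
    have hle : π * ((r + rd - y) / 2) ^ 2 ≤ M :=
      le_min (mul_le_mul_of_nonneg_left (pow_le_pow_left₀ hρ0 hρr 2) Real.pi_nonneg)
        (mul_le_mul_of_nonneg_left (pow_le_pow_left₀ hρ0 hρrd 2) Real.pi_nonneg)
    have hminge : π * ((r + rd - y) / 2) ^ 2 ≤ min M (lensArea r rd y) := le_min hle hge
    have hexp : Real.exp (-(lf * min M (lensArea r rd y)))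
        ≤ Real.exp (-(lf * (π * ((r + rd - y) / 2) ^ 2))) := by
      apply Real.exp_le_exp.mpr
      apply neg_le_neg
      exact mul_le_mul_of_nonneg_left hminge hlf.le
    exact mul_le_mul_of_nonneg_right hexp (by positivity)
  -- combine
  by_cases hfi : IntervalIntegrable
      (fun y => Real.exp (-(lf * min M (lensArea r rd y))) * (2 * y / rd ^ 2)) volume 0 rd
  · have hsub1 : Set.uIcc (0:ℝ) d ⊆ Set.uIcc (0:ℝ) rd := by
      rw [Set.uIcc_of_le hd0, Set.uIcc_of_le (hd0.trans hdrd)]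
      exact Set.Icc_subset_Icc le_rfl hdrd
    have hsub2 : Set.uIcc d rd ⊆ Set.uIcc (0:ℝ) rd := by
      rw [Set.uIcc_of_le hdrd, Set.uIcc_of_le (hd0.trans hdrd)]
      exact Set.Icc_subset_Icc hd0 le_rfl
    have h0d := hfi.mono_set hsub1
    have hdr := hfi.mono_set hsub2
    rw [← intervalIntegral.integral_add_adjacent_intervals h0d hdr]
    refine add_le_add ?_ ?_
    · exact intervalIntegral.integral_mono_on hd0 h0d
        ((by fun_prop : Continuous fun y : ℝ => Real.exp (-(lf * M)) * (2 * y / rd ^ 2)).intervalIntegrable _ _) p1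
    · exact intervalIntegral.integral_mono_on hdrd hdr (hg2c.intervalIntegrable _ _) p2
  · rw [intervalIntegral.integral_undef hfi]
    refine add_nonneg ?_ ?_
    · apply intervalIntegral.integral_nonneg hd0
      intro y hy
      exact mul_nonneg (Real.exp_nonneg _) (div_nonneg (by linarith [hy.1]) (sq_nonneg rd))
    · apply intervalIntegral.integral_nonneg hdrd
      intro y hy
      rw [hg2]
      exact mul_nonneg (Real.exp_nonneg _)
        (div_nonneg (by linarith [le_trans hd0 hy.1]) (sq_nonneg rd))
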